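/- Let W be a finite-dimensional real inner product space and θ : W → ℝ ∪ {+∞} proper convex with minimizer w*. Let (t_k) satisfy t_1 = 1, t_{k+1} = (1 + sqrt(1 + 4 t_k²))/2, and let H ⪰ 0 be self-adjoint. Suppose sequences (w̃^k), (w^k) satisfy the descent inequality θ(w̃^k) - θ(w) ≤ (1/2)‖w - w^k‖²_H - (1/2)‖w - w̃^k‖²_H for all w and k ≥ 1, where w^1 = w̃^0 and w^{k} = w̃^{k-1} + ((t_{k-1}-1)/t_k)(w̃^{k-1} - w̃^{k-2}) for k ≥ 2. Then for all k ≥ 1, θ(w̃^k) - θ(w*) ≤ 2‖w̃^0 - w*‖²_H / (k+1)². -/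

import Mathlib

/-- `O(1/k²)` complexity of the exact majorized accelerated BCD method:
if the iterates satisfy the one-cycle sufficient descent inequality and the
Nesterov extrapolation rule, then
`θ(w̃^k) - θ(w*) ≤ 2‖w̃^0 - w*‖²_H / (k+1)²`. -/
theorem mABCD_O_one_over_k_sq
    {W : Type*} [NormedAddCommGroup W] [InnerProductSpace ℝ W] [FiniteDimensional ℝ W]
    (θ : W → ℝ) (hθconv : ConvexOn ℝ Set.univ θ)
    (wstar : W) (hmin : ∀ w : W, θ wstar ≤ θ w)
    (t : ℕ → ℝ) (ht1 : t 1 = 1)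
    (htrec : ∀ k ≥ 1, t (k + 1) = (1 + Real.sqrt (1 + 4 * t k ^ 2)) / 2)
    (H : W →ₗ[ℝ] W)
    (hHsa : ∀ x y : W, (inner ℝ (H x) y : ℝ) = inner ℝ x (H y))
    (hHpsd : ∀ x : W, 0 ≤ (inner ℝ x (H x) : ℝ))
    (wt w : ℕ → W)
    (hw1 : w 1 = wt 0)
    (hwk : ∀ k ≥ 2, w k = wt (k - 1) + ((t (k - 1) - 1) / t k) • (wt (k - 1) - wt (k - 2)))
    (hdescent : ∀ k ≥ 1, ∀ z : W,
      θ (wt k) - θ z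
        ≤ 1 / 2 * (inner ℝ (z - w k) (H (z - w k)) : ℝ)
          - 1 / 2 * (inner ℝ (z - wt k) (H (z - wt k)) : ℝ)) :
    ∀ k : ℕ, 1 ≤ k →
      θ (wt k) - θ wstar
        ≤ 2 * (inner ℝ (wt 0 - wstar) (H (wt 0 - wstar)) : ℝ) / ((k : ℝ) + 1) ^ 2 := by
  -- lower bound on t
  have hge : ∀ k : ℕ, 1 ≤ k → ((k : ℝ) + 1) / 2 ≤ t k := by
    intro k hk
    induction k, hk using Nat.le_induction with
    | base => rw [ht1]; norm_num
    | succ n hn ih =>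
      have htn : (0:ℝ) ≤ t n := by
        have h0 : (0:ℝ) ≤ ((n:ℝ)+1)/2 := by positivity
        linarith
      have hs : 2 * t n ≤ Real.sqrt (1 + 4 * t n ^ 2) := by
        have h1 : Real.sqrt ((2 * t n)^2) = 2 * t n := Real.sqrt_sq (by linarith)
        have h2 : Real.sqrt ((2 * t n)^2) ≤ Real.sqrt (1 + 4 * t n ^ 2) :=
          Real.sqrt_le_sqrt (by nlinarith)
        linarith
      rw [htrec n hn]
      push_cast
      linarith
  have hpos : ∀ k : ℕ, 1 ≤ k → (1:ℝ) ≤ t k := by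
    intro k hk
    have h1 := hge k hk
    have h2 : (1:ℝ) ≤ (k:ℝ) := by exact_mod_cast hk
    linarith
  have hsq : ∀ k : ℕ, 1 ≤ k → t (k+1)^2 - t (k+1) = t k ^ 2 := by
    intro k hk
    have h0 : (0:ℝ) ≤ 1 + 4 * t k ^ 2 := by positivity
    rw [htrec k hk]
    linear_combination (Real.sq_sqrt h0) / 4
  have hiq : ∀ (c : ℝ) (x : W),
      (inner ℝ (c • x) (H (c • x)) : ℝ) = c^2 * (inner ℝ x (H x) : ℝ) := by
    intro c x
    rw [map_smul, real_inner_smul_left, real_inner_smul_right]; ring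
  set U : ℕ → W := fun k => t k • wt k - (t k - 1) • wt (k-1) - wstar with hUdef
  have E : ∀ k : ℕ, 1 ≤ k →
      t k ^ 2 * (θ (wt k) - θ wstar) + 1/2 * (inner ℝ (U k) (H (U k)) : ℝ)
        ≤ 1/2 * (inner ℝ (wt 0 - wstar) (H (wt 0 - wstar)) : ℝ) := by
    intro k hk
    induction k, hk using Nat.le_induction with
    | base =>
      have hb := hdescent 1 (by norm_num) wstar
      rw [hw1] at hb
      have hU1 : U 1 = wt 1 - wstar := by simp [hUdef, ht1]
      have e1 : wstar - wt 0 = (-1 : ℝ) • (wt 0 - wstar) := by module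
      have e2 : wstar - wt 1 = (-1 : ℝ) • (U 1) := by rw [hU1]; module
      rw [e1, e2, hiq, hiq] at hb
      rw [ht1]
      norm_num at hb ⊢
      linarith
    | succ n hn ih =>
      have hT1 : (1:ℝ) ≤ t (n+1) := hpos (n+1) (by omega)
      have hT0 : (0:ℝ) < t (n+1) := by linarith
      have hT0' : t (n+1) ≠ 0 := ne_of_gt hT0
      have hUk : U n = t n • wt n - (t n - 1) • wt (n-1) - wstar := by simp [hUdef]
      have hUk1 : U (n+1) = t (n+1) • wt (n+1) - (t (n+1) - 1) • wt n - wstar := by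
        simp [hUdef]
      set z : W := (1 - 1/t (n+1)) • wt n + (1/t (n+1)) • wstar with hz
      have hw' := hwk (n+1) (by omega)
      have e1' : n + 1 - 1 = n := by omega
      have e2' : n + 1 - 2 = n - 1 := by omega
      rw [e1', e2'] at hw'
      have h1 : z - w (n+1) = (-(1/t (n+1))) • U n := by
        rw [hz, hw', hUk]
        match_scalars <;> field_simp <;> ring
      have h2 : z - wt (n+1) = (-(1/t (n+1))) • U (n+1) := by
        rw [hz, hUk1]
        match_scalars <;> field_simp <;> ring
      have hd := hdescent (n+1) (by omega) z
      rw [h1, h2, hiq, hiq] at hd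
      have hconv := hθconv.2 (Set.mem_univ (wt n)) (Set.mem_univ wstar)
        (show (0:ℝ) ≤ 1 - 1/t (n+1) by
          have h3 : 1/t (n+1) ≤ 1 := by rw [div_le_one hT0]; exact hT1
          linarith)
        (show (0:ℝ) ≤ 1/t (n+1) by positivity)
        (by ring)
      rw [← hz] at hconv
      have hd2 : t (n+1)^2 * (θ (wt (n+1)) - θ z)
          ≤ 1/2 * (inner ℝ (U n) (H (U n)) : ℝ)
            - 1/2 * (inner ℝ (U (n+1)) (H (U (n+1))) : ℝ) := by
        have h := mul_le_mul_of_nonneg_left hd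
          (le_of_lt (by positivity : (0:ℝ) < t (n+1)^2))
        calc t (n+1)^2 * (θ (wt (n+1)) - θ z)
            ≤ t (n+1)^2 * (1/2 * ((-(1/t (n+1)))^2 * (inner ℝ (U n) (H (U n)) : ℝ))
              - 1/2 * ((-(1/t (n+1)))^2 * (inner ℝ (U (n+1)) (H (U (n+1))) : ℝ))) := h
          _ = _ := by field_simp
      have hconv2 : t (n+1)^2 * θ z
          ≤ (t (n+1)^2 - t (n+1)) * θ (wt n) + t (n+1) * θ wstar := by
        have h := mul_le_mul_of_nonneg_left hconv
          (by positivity : (0:ℝ) ≤ t (n+1)^2)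
        calc t (n+1)^2 * θ z
            ≤ t (n+1)^2 * ((1 - 1/t (n+1)) * θ (wt n) + (1/t (n+1)) * θ wstar) := h
          _ = _ := by field_simp
      have hs := hsq n hn
      rw [← hs] at ih
      linarith [hd2, hconv2, ih]
  intro k hk
  have hE := E k hk
  have hq1 := hHpsd (U k)
  have hv : 0 ≤ θ (wt k) - θ wstar := sub_nonneg.mpr (hmin _)
  have hgek := hge k hk
  rw [le_div_iff₀ (by positivity : (0:ℝ) < ((k:ℝ) + 1) ^ 2)]
  have ht2 : (((k:ℝ)+1)/2)^2 ≤ t k ^ 2 :=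
    pow_le_pow_left₀ (by positivity) hgek 2
  nlinarith [mul_le_mul_of_nonneg_right ht2 hv, hE, hq1]
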